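/- The trilinear bracket [·,·,·] on A satisfies the Fundamental Identity of Filippov: for all x1, x2, x3, y2, y3 ∈ A, [[x1,x2,x3], y2, y3] = [[x1,y2,y3], x2, x3] + [x1, [x2,y2,y3], x3] + [x1, x2, [x3,y2,y3]]. Hence (A, [·,·,·]) is a 3-Lie algebra. -/

import Mathlib

set_option linter.unusedSectionVars false
noncomputable section

/-- The half-integers `½ℤ = {k/2 : k ∈ ℤ}` as an additive subgroup of `ℚ`. -/
def HalfInt : AddSubgroup ℚ where
  carrier := {q | ∃ k : ℤ, q = k / 2}
  add_mem' := by rintro a b ⟨k, rfl⟩ ⟨j, rfl⟩; exact ⟨k + j, by push_cast; ring⟩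
  zero_mem' := ⟨0, by norm_num⟩
  neg_mem' := by rintro a ⟨k, rfl⟩; exact ⟨-k, by push_cast; ring⟩

/-- The half-integer `k/2`. -/
def hh (k : ℤ) : HalfInt := ⟨(k : ℚ) / 2, ⟨k, rfl⟩⟩

variable (F : Type*) [Field F] [CharZero F]

/-- `A` is the group algebra of `(½ℤ)³` over `F`; the basis element indexed by
`(l, m, r)` is `L_{l,m}^r`. -/
abbrev A := AddMonoidAlgebra F (HalfInt × HalfInt × HalfInt)

/-- The basis element `L_{l,m}^r` of `A`. -/
def L (l m r : HalfInt) : A F := AddMonoidAlgebra.single (l, m, r) 1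

/-- `M(α₁,α₂,α₃)`: the determinant of the 3×3 matrix with rows `(r₁,r₂,r₃)`,
`(l₁,l₂,l₃)`, `(m₁,m₂,m₃)`, computed in `ℚ` and mapped into `F`.
Here an index `α = (l, m, r)`. -/
def Mdet (α β γ : HalfInt × HalfInt × HalfInt) : F :=
  ((Matrix.det !![(α.2.2 : ℚ), (β.2.2 : ℚ), (γ.2.2 : ℚ);
                  (α.1 : ℚ),   (β.1 : ℚ),   (γ.1 : ℚ);
                  (α.2.1 : ℚ), (β.2.1 : ℚ), (γ.2.1 : ℚ)] : ℚ) : F)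

/-- The shift `ν = (1, 1, 0)` (in coordinates `(l, m, r)`). -/
def nu : HalfInt × HalfInt × HalfInt := (hh 2, hh 2, hh 0)

/-- The alternating trilinear bracket on `A`, determined on basis elements by
`[L_{l₁,m₁}^{r₁}, L_{l₂,m₂}^{r₂}, L_{l₃,m₃}^{r₃}]
  = M(α₁,α₂,α₃) · L_{l₁+l₂+l₃-1, m₁+m₂+m₃-1}^{r₁+r₂+r₃}`. -/
def bracket (x y z : A F) : A F :=
  Finsupp.sum x.coeff fun α a => Finsupp.sum y.coeff fun β b => Finsupp.sum z.coeff fun γ c =>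
    AddMonoidAlgebra.single (α + β + γ - nu) (a * b * c * Mdet F α β γ)

section Aux

variable {F}

lemma bracket_zero_left (y z : A F) : bracket F 0 y z = 0 := by
  simp [bracket]

lemma bracket_zero_mid (x z : A F) : bracket F x 0 z = 0 := by
  simp [bracket]

lemma bracket_zero_right (x y : A F) : bracket F x y 0 = 0 := by
  simp [bracket]

lemma bracket_add_left (x x' y z : A F) :
    bracket F (x + x') y z = bracket F x y z + bracket F x' y z := by
  unfold bracket
  rw [AddMonoidAlgebra.coeff_add, Finsupp.sum_add_index']
  · intro α
    simp [Finsupp.sum]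
  · intro α a a'
    rw [← Finsupp.sum_add]
    refine Finsupp.sum_congr fun β _ => ?_
    rw [← Finsupp.sum_add]
    refine Finsupp.sum_congr fun γ _ => ?_
    rw [← AddMonoidAlgebra.single_add]
    congr 1
    ring

lemma bracket_add_mid (x y y' z : A F) :
    bracket F x (y + y') z = bracket F x y z + bracket F x y' z := by
  unfold bracket
  rw [← Finsupp.sum_add]
  refine Finsupp.sum_congr fun α _ => ?_
  rw [AddMonoidAlgebra.coeff_add, Finsupp.sum_add_index']
  · intro β
    simp [Finsupp.sum]
  · intro β b b'
    rw [← Finsupp.sum_add]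
    refine Finsupp.sum_congr fun γ _ => ?_
    rw [← AddMonoidAlgebra.single_add]
    congr 1
    ring

lemma bracket_add_right (x y z z' : A F) :
    bracket F x y (z + z') = bracket F x y z + bracket F x y z' := by
  unfold bracket
  rw [← Finsupp.sum_add]
  refine Finsupp.sum_congr fun α _ => ?_
  rw [← Finsupp.sum_add]
  refine Finsupp.sum_congr fun β _ => ?_
  rw [AddMonoidAlgebra.coeff_add, Finsupp.sum_add_index']
  · intro γ
    simp
  · intro γ c c'
    rw [← AddMonoidAlgebra.single_add]
    congr 1
    ring

lemma bracket_single (α β γ : HalfInt × HalfInt × HalfInt) (a b c : F) :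
    bracket F (AddMonoidAlgebra.single α a) (AddMonoidAlgebra.single β b)
        (AddMonoidAlgebra.single γ c)
      = AddMonoidAlgebra.single (α + β + γ - nu) (a * b * c * Mdet F α β γ) := by
  unfold bracket
  simp only [AddMonoidAlgebra.coeff_single]
  rw [Finsupp.sum_single_index, Finsupp.sum_single_index, Finsupp.sum_single_index]
  · simp
  · rw [Finsupp.sum_single_index] <;> simp
  · rw [Finsupp.sum_single_index, Finsupp.sum_single_index] <;> simp

lemma det3 (a b c d e f g h i : ℚ) :
    Matrix.det !![a, b, c; d, e, f; g, h, i]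
      = a * e * i - a * f * h - b * d * i + b * f * g + c * d * h - c * e * g := by
  simp [Matrix.det_fin_three]

set_option maxHeartbeats 1000000 in
lemma keyQ (α β γ δ ε : HalfInt × HalfInt × HalfInt) :
    Mdet F α β γ * Mdet F (α + β + γ - nu) δ ε
      = Mdet F α δ ε * Mdet F (α + δ + ε - nu) β γ
        + Mdet F β δ ε * Mdet F α (β + δ + ε - nu) γ
        + Mdet F γ δ ε * Mdet F α β (γ + δ + ε - nu) := by
  have h2 : ((hh 2 : HalfInt) : ℚ) = 1 := by norm_num [hh]
  have h0 : ((hh 0 : HalfInt) : ℚ) = 0 := by norm_num [hh]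
  simp only [Mdet, nu, Prod.fst_add, Prod.snd_add, Prod.fst_sub, Prod.snd_sub, det3]
  push_cast [h2, h0]
  ring

lemma fi5 (α β γ δ ε : HalfInt × HalfInt × HalfInt) (a b c d e : F) :
    bracket F (bracket F (AddMonoidAlgebra.single α a) (AddMonoidAlgebra.single β b)
        (AddMonoidAlgebra.single γ c)) (AddMonoidAlgebra.single δ d)
        (AddMonoidAlgebra.single ε e)
      = bracket F (bracket F (AddMonoidAlgebra.single α a) (AddMonoidAlgebra.single δ d)
          (AddMonoidAlgebra.single ε e)) (AddMonoidAlgebra.single β b)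
          (AddMonoidAlgebra.single γ c)
        + bracket F (AddMonoidAlgebra.single α a)
            (bracket F (AddMonoidAlgebra.single β b) (AddMonoidAlgebra.single δ d)
              (AddMonoidAlgebra.single ε e)) (AddMonoidAlgebra.single γ c)
        + bracket F (AddMonoidAlgebra.single α a) (AddMonoidAlgebra.single β b)
            (bracket F (AddMonoidAlgebra.single γ c) (AddMonoidAlgebra.single δ d)
              (AddMonoidAlgebra.single ε e)) := by
  simp only [bracket_single]
  have e1 : α + δ + ε - nu + β + γ - nu = α + β + γ - nu + δ + ε - nu := by abel
  have e2 : α + (β + δ + ε - nu) + γ - nu = α + β + γ - nu + δ + ε - nu := by abel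
  have e3 : α + β + (γ + δ + ε - nu) - nu = α + β + γ - nu + δ + ε - nu := by abel
  rw [e1, e2, e3, ← AddMonoidAlgebra.single_add, ← AddMonoidAlgebra.single_add]
  congr 1
  linear_combination a * b * c * d * e * keyQ (F := F) α β γ δ ε

lemma fi4 (α β γ δ : HalfInt × HalfInt × HalfInt) (a b c d : F) (y3 : A F) :
    bracket F (bracket F (AddMonoidAlgebra.single α a) (AddMonoidAlgebra.single β b)
        (AddMonoidAlgebra.single γ c)) (AddMonoidAlgebra.single δ d) y3
      = bracket F (bracket F (AddMonoidAlgebra.single α a) (AddMonoidAlgebra.single δ d) y3)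
          (AddMonoidAlgebra.single β b) (AddMonoidAlgebra.single γ c)
        + bracket F (AddMonoidAlgebra.single α a)
            (bracket F (AddMonoidAlgebra.single β b) (AddMonoidAlgebra.single δ d) y3)
            (AddMonoidAlgebra.single γ c)
        + bracket F (AddMonoidAlgebra.single α a) (AddMonoidAlgebra.single β b)
            (bracket F (AddMonoidAlgebra.single γ c) (AddMonoidAlgebra.single δ d) y3) := by
  induction y3 using AddMonoidAlgebra.induction with
  | zero => simp [bracket_zero_left, bracket_zero_mid, bracket_zero_right]
  | single_add ε e s _ _ ih =>
    repeat rw [bracket_add_left]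
    repeat rw [bracket_add_mid]
    repeat rw [bracket_add_right]
    repeat rw [bracket_add_left]
    repeat rw [bracket_add_mid]
    rw [ih, fi5]
    abel

lemma fi3 (α β γ : HalfInt × HalfInt × HalfInt) (a b c : F) (y2 y3 : A F) :
    bracket F (bracket F (AddMonoidAlgebra.single α a) (AddMonoidAlgebra.single β b)
        (AddMonoidAlgebra.single γ c)) y2 y3
      = bracket F (bracket F (AddMonoidAlgebra.single α a) y2 y3)
          (AddMonoidAlgebra.single β b) (AddMonoidAlgebra.single γ c)
        + bracket F (AddMonoidAlgebra.single α a)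
            (bracket F (AddMonoidAlgebra.single β b) y2 y3) (AddMonoidAlgebra.single γ c)
        + bracket F (AddMonoidAlgebra.single α a) (AddMonoidAlgebra.single β b)
            (bracket F (AddMonoidAlgebra.single γ c) y2 y3) := by
  induction y2 using AddMonoidAlgebra.induction with
  | zero => simp [bracket_zero_left, bracket_zero_mid, bracket_zero_right]
  | single_add δ d s _ _ ih =>
    repeat rw [bracket_add_left]
    repeat rw [bracket_add_mid]
    repeat rw [bracket_add_right]
    repeat rw [bracket_add_left]
    repeat rw [bracket_add_mid]
    rw [ih, fi4]
    abel

lemma fi2 (α β : HalfInt × HalfInt × HalfInt) (a b : F) (x3 y2 y3 : A F) :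
    bracket F (bracket F (AddMonoidAlgebra.single α a) (AddMonoidAlgebra.single β b) x3) y2 y3
      = bracket F (bracket F (AddMonoidAlgebra.single α a) y2 y3)
          (AddMonoidAlgebra.single β b) x3
        + bracket F (AddMonoidAlgebra.single α a)
            (bracket F (AddMonoidAlgebra.single β b) y2 y3) x3
        + bracket F (AddMonoidAlgebra.single α a) (AddMonoidAlgebra.single β b)
            (bracket F x3 y2 y3) := by
  induction x3 using AddMonoidAlgebra.induction with
  | zero => simp [bracket_zero_left, bracket_zero_mid, bracket_zero_right]
  | single_add γ c s _ _ ih =>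
    repeat rw [bracket_add_left]
    repeat rw [bracket_add_mid]
    repeat rw [bracket_add_right]
    repeat rw [bracket_add_left]
    repeat rw [bracket_add_mid]
    rw [ih, fi3]
    abel

lemma fi1 (α : HalfInt × HalfInt × HalfInt) (a : F) (x2 x3 y2 y3 : A F) :
    bracket F (bracket F (AddMonoidAlgebra.single α a) x2 x3) y2 y3
      = bracket F (bracket F (AddMonoidAlgebra.single α a) y2 y3) x2 x3
        + bracket F (AddMonoidAlgebra.single α a) (bracket F x2 y2 y3) x3
        + bracket F (AddMonoidAlgebra.single α a) x2 (bracket F x3 y2 y3) := by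
  induction x2 using AddMonoidAlgebra.induction with
  | zero => simp [bracket_zero_left, bracket_zero_mid, bracket_zero_right]
  | single_add β b s _ _ ih =>
    repeat rw [bracket_add_left]
    repeat rw [bracket_add_mid]
    repeat rw [bracket_add_right]
    repeat rw [bracket_add_left]
    repeat rw [bracket_add_mid]
    rw [ih, fi2]
    abel

end Aux

/-- the bracket on `A` satisfies the Fundamental Identity of Filippov,
so `(A, [·,·,·])` is a 3-Lie algebra. -/
theorem fundamental_identity (x1 x2 x3 y2 y3 : A F) :
    bracket F (bracket F x1 x2 x3) y2 y3
      = bracket F (bracket F x1 y2 y3) x2 x3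
        + bracket F x1 (bracket F x2 y2 y3) x3
        + bracket F x1 x2 (bracket F x3 y2 y3) := by
  induction x1 using AddMonoidAlgebra.induction with
  | zero => simp [bracket_zero_left, bracket_zero_mid, bracket_zero_right]
  | single_add α a s _ _ ih =>
    repeat rw [bracket_add_left]
    repeat rw [bracket_add_mid]
    repeat rw [bracket_add_right]
    repeat rw [bracket_add_left]
    repeat rw [bracket_add_mid]
    rw [ih, fi1]
    abel
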